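/- For a pmf p on ℕ with p(i) → 0, the discrete Fisher information strictly dominates the squared sup-norm: I_d(p) > ‖p‖_∞², where ‖p‖_∞ = sup_i p(i). -/

import Mathlib

open Filter Real

theorem dfi_gt_sup_sq (p : ℕ → ℝ) (hp : ∀ i, 0 ≤ p i)
    (hsum : ∑' i, p i = 1) (htend : Tendsto p atTop (nhds 0)) :
    4 * ∑' i : ℕ, (Real.sqrt (p (i + 1)) - Real.sqrt (p i)) ^ 2 > (⨆ i, p i) ^ 2 := by
  have hsumm : Summable p := by
    by_contra h
    rw [tsum_eq_zero_of_not_summable h] at hsum; norm_num at hsum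
  have hle1 : ∀ i, p i ≤ 1 := by
    intro i
    calc p i ≤ ∑' j, p j := Summable.le_tsum hsumm i (fun j _ => hp j)
    _ = 1 := hsum
  have hbdd : BddAbove (Set.range p) := ⟨1, by rintro _ ⟨i, rfl⟩; exact hle1 i⟩
  have hex : ∃ j, 0 < p j := by
    by_contra h
    push_neg at h
    have hz : ∀ i, p i = 0 := fun i => le_antisymm (h i) (hp i)
    rw [tsum_congr hz, tsum_zero] at hsum; norm_num at hsum
  obtain ⟨j, hj⟩ := hex
  -- the sup is attained at some k
  obtain ⟨N, hN⟩ : ∃ N, ∀ n ≥ N, p n < p j := by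
    have := htend (Iio_mem_nhds hj)
    rw [Filter.mem_map, mem_atTop_sets] at this
    obtain ⟨N, hN⟩ := this
    exact ⟨N, fun n hn => hN n hn⟩
  obtain ⟨k, hkmem, hk⟩ := Finset.exists_max_image (Finset.range (N + 1)) p ⟨0, by simp⟩
  have hjN : j < N + 1 := by
    by_contra h
    exact absurd (hN j (by omega)) (lt_irrefl _)
  have hmax : ∀ i, p i ≤ p k := by
    intro i
    rcases lt_or_ge i (N + 1) with hi | hi
    · exact hk i (Finset.mem_range.mpr hi)
    · exact le_of_lt (lt_of_lt_of_le (hN i (by omega)) (hk j (Finset.mem_range.mpr hjN)))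
  have hM : (⨆ i, p i) = p k := le_antisymm (ciSup_le hmax) (le_ciSup hbdd k)
  set M := p k with hMdef
  have hM0 : 0 < M := lt_of_lt_of_le hj (hmax j)
  set a : ℕ → ℝ := fun i => Real.sqrt (p i) with ha
  set q : ℕ → ℝ := fun i => p (i + k) with hqdef
  have hq0 : 0 ≤ q := fun i => hp _
  have hq : Summable q := (summable_nat_add_iff k).2 hsumm
  have hq1 : Summable (fun i => q (i + 1)) := by
    have : Summable (fun i => p (i + (k + 1))) := (summable_nat_add_iff (k + 1)).2 hsumm
    refine this.congr fun i => ?_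
    simp [hqdef]; ring_nf
  -- telescoping
  have hd : Summable (fun i => q i - q (i + 1)) := hq.sub hq1
  have hqtend : Tendsto q atTop (nhds 0) := htend.comp (tendsto_add_atTop_nat k)
  have htel : ∑' i, (q i - q (i + 1)) = M := by
    have h1 : Tendsto (fun n => ∑ i ∈ Finset.range n, (q i - q (i + 1))) atTop (nhds (q 0)) := by
      simp only [Finset.sum_range_sub']
      simpa using tendsto_const_nhds.sub hqtend
    have h2 : q 0 = M := by simp [hqdef, hMdef]
    rw [← h2]
    exact (hd.hasSum_iff_tendsto_nat.mpr h1).tsum_eq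
  -- F and G
  set F : ℕ → ℝ := fun i => |a (i + k) - a (i + 1 + k)| with hF
  set G : ℕ → ℝ := fun i => a (i + k) + a (i + 1 + k) with hG
  have hF0 : ∀ i, 0 ≤ F i := fun i => abs_nonneg _
  have hG0 : ∀ i, 0 ≤ G i := fun i => add_nonneg (Real.sqrt_nonneg _) (Real.sqrt_nonneg _)
  have hfact : ∀ i, |q i - q (i + 1)| = F i * G i := by
    intro i
    have e1 : q i = a (i + k) ^ 2 := by simp [hqdef, ha, Real.sq_sqrt (hp _)]
    have e2 : q (i + 1) = a (i + 1 + k) ^ 2 := by simp [hqdef, ha, Real.sq_sqrt (hp _)]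
    rw [e1, e2, hF, hG]
    rw [show a (i + k) ^ 2 - a (i + 1 + k) ^ 2
        = (a (i + k) - a (i + 1 + k)) * (a (i + k) + a (i + 1 + k)) by ring,
      abs_mul, abs_of_nonneg (hG0 i)]
  have hFG : Summable (fun i => F i * G i) := by
    refine Summable.of_nonneg_of_le (fun i => mul_nonneg (hF0 i) (hG0 i)) (fun i => ?_)
      (hq.add hq1)
    rw [← hfact i]
    have := abs_sub_abs_le_abs_sub (q i) (q (i + 1))
    calc |q i - q (i + 1)| ≤ |q i| + |q (i + 1)| := abs_sub _ _
    _ = q i + q (i + 1) := by rw [abs_of_nonneg (hq0 i), abs_of_nonneg (hq0 (i + 1))]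
  -- summabilities of squares
  have hF2 : Summable (fun i => F i ^ 2) := by
    refine Summable.of_nonneg_of_le (fun i => sq_nonneg _) (fun i => ?_) (hq.add hq1)
    rw [hF, sq_abs]
    have h1 : a (i + k) ^ 2 = q i := by simp [hqdef, ha, Real.sq_sqrt (hp _)]
    have h2 : a (i + 1 + k) ^ 2 = q (i + 1) := by simp [hqdef, ha, Real.sq_sqrt (hp _)]
    nlinarith [mul_nonneg (Real.sqrt_nonneg (p (i + k))) (Real.sqrt_nonneg (p (i + 1 + k)))]
  have hG2 : Summable (fun i => G i ^ 2) := by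
    refine Summable.of_nonneg_of_le (fun i => sq_nonneg _) (fun i => ?_)
      ((hq.add hq1).mul_left 2)
    show (a (i + k) + a (i + 1 + k)) ^ 2 ≤ 2 * (q i + q (i + 1))
    have h1 : a (i + k) ^ 2 = q i := by simp [hqdef, ha, Real.sq_sqrt (hp _)]
    have h2 : a (i + 1 + k) ^ 2 = q (i + 1) := by simp [hqdef, ha, Real.sq_sqrt (hp _)]
    nlinarith [sq_nonneg (a (i + k) - a (i + 1 + k))]
  set A := ∑' i, F i ^ 2 with hA
  set B := ∑' i, G i ^ 2 with hB
  have hA0 : 0 ≤ A := tsum_nonneg fun i => sq_nonneg _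
  have hB0 : 0 ≤ B := tsum_nonneg fun i => sq_nonneg _
  -- M ≤ √A √B
  have hMle : M ≤ Real.sqrt A * Real.sqrt B := by
    have step1 : M ≤ ∑' i, F i * G i := by
      rw [← htel]
      refine Summable.tsum_le_tsum (fun i => ?_) hd hFG
      rw [← hfact i]; exact le_abs_self _
    refine step1.trans (Summable.tsum_le_of_sum_le hFG fun s => ?_)
    have hcs := Finset.sum_mul_sq_le_sq_mul_sq s F G
    have h1 : ∑ i ∈ s, F i ^ 2 ≤ A := Summable.sum_le_tsum s (fun i _ => sq_nonneg _) hF2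
    have h2 : ∑ i ∈ s, G i ^ 2 ≤ B := Summable.sum_le_tsum s (fun i _ => sq_nonneg _) hG2
    have h3 : (∑ i ∈ s, F i * G i) ^ 2 ≤ A * B := by
      refine hcs.trans (mul_le_mul h1 h2 (Finset.sum_nonneg fun i _ => sq_nonneg _) hA0)
    have h4 : 0 ≤ ∑ i ∈ s, F i * G i :=
      Finset.sum_nonneg fun i _ => mul_nonneg (hF0 i) (hG0 i)
    rw [← Real.sqrt_mul hA0]
    exact (Real.le_sqrt h4 (mul_nonneg hA0 hB0)).mpr h3
  have hM2 : M ^ 2 ≤ A * B := by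
    calc M ^ 2 ≤ (Real.sqrt A * Real.sqrt B) ^ 2 :=
          pow_le_pow_left₀ hM0.le hMle 2
    _ = A * B := by rw [mul_pow, Real.sq_sqrt hA0, Real.sq_sqrt hB0]
  -- B ≤ 4 - 2M
  have hQle : ∑' i, q i ≤ 1 := by
    have := Summable.sum_add_tsum_nat_add k hsumm
    rw [hsum] at this
    have hnn : 0 ≤ ∑ i ∈ Finset.range k, p i := Finset.sum_nonneg fun i _ => hp i
    linarith
  have hQ'eq : ∑' i, q (i + 1) = (∑' i, q i) - M := by
    have := Summable.sum_add_tsum_nat_add 1 hq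
    simp only [Finset.range_one, Finset.sum_singleton] at this
    have h2 : q 0 = M := by simp [hqdef, hMdef]
    linarith
  have hBle : B ≤ 4 - 2 * M := by
    have step : B ≤ ∑' i, 2 * (q i + q (i + 1)) := by
      refine Summable.tsum_le_tsum (fun i => ?_) hG2 ((hq.add hq1).mul_left 2)
      show (a (i + k) + a (i + 1 + k)) ^ 2 ≤ 2 * (q i + q (i + 1))
      have h1 : a (i + k) ^ 2 = q i := by simp [hqdef, ha, Real.sq_sqrt (hp _)]
      have h2 : a (i + 1 + k) ^ 2 = q (i + 1) := by simp [hqdef, ha, Real.sq_sqrt (hp _)]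
      nlinarith [sq_nonneg (a (i + k) - a (i + 1 + k))]
    have heq : ∑' i, 2 * (q i + q (i + 1)) = 2 * ((∑' i, q i) + ((∑' i, q i) - M)) := by
      rw [← hQ'eq, ← Summable.tsum_add hq hq1, ← tsum_mul_left]
    rw [heq] at step
    linarith
  -- A ≤ T
  set d : ℕ → ℝ := fun i => (Real.sqrt (p (i + 1)) - Real.sqrt (p i)) ^ 2 with hdd
  have hdsumm : Summable d := by
    refine Summable.of_nonneg_of_le (fun i => sq_nonneg _) (fun i => ?_)
      (((summable_nat_add_iff 1).2 hsumm).add hsumm)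
    show (Real.sqrt (p (i + 1)) - Real.sqrt (p i)) ^ 2 ≤ p (i + 1) + p i
    have h1 : Real.sqrt (p (i + 1)) ^ 2 = p (i + 1) := Real.sq_sqrt (hp _)
    have h2 : Real.sqrt (p i) ^ 2 = p i := Real.sq_sqrt (hp _)
    nlinarith [mul_nonneg (Real.sqrt_nonneg (p (i + 1))) (Real.sqrt_nonneg (p i))]
  set T := ∑' i, d i with hT
  have hAT : A ≤ T := by
    have := Summable.sum_add_tsum_nat_add k hdsumm
    have hnn : 0 ≤ ∑ i ∈ Finset.range k, d i := Finset.sum_nonneg fun i _ => sq_nonneg _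
    have hcong : ∑' i, d (i + k) = A := by
      refine tsum_congr fun i => ?_
      rw [hdd, hF, sq_abs, ha]
      ring_nf
    rw [hcong] at this
    linarith
  -- T > 0
  have hT0 : 0 < T := by
    obtain ⟨n, hn⟩ : ∃ n, p n ≠ p (n + 1) := by
      by_contra h
      push_neg at h
      have hconst : ∀ n, p n = p 0 := by
        intro n
        induction n with
        | zero => rfl
        | succ m ih => rw [← h m, ih]
      have hp0 : p 0 = 0 := by
        have : Tendsto p atTop (nhds (p 0)) := by
          have : p = fun _ => p 0 := funext hconst
          rw [this]; exact tendsto_const_nhds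
        exact tendsto_nhds_unique this htend
      have := hconst k
      rw [hp0] at this
      exact absurd this (ne_of_gt hM0)
    have hdn : 0 < d n := by
      rw [hdd]
      have : Real.sqrt (p (n + 1)) ≠ Real.sqrt (p n) := by
        intro h
        apply hn
        have := congrArg (fun x => x ^ 2) h
        simpa [Real.sq_sqrt (hp (n + 1)), Real.sq_sqrt (hp n)] using this.symm
      exact pow_two_pos_of_ne_zero (sub_ne_zero.mpr this)
    calc (0 : ℝ) < d n := hdn
    _ ≤ T := Summable.le_tsum hdsumm n fun m _ => sq_nonneg _
  -- conclude
  rw [hM]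
  calc M ^ 2 ≤ A * B := hM2
  _ ≤ T * (4 - 2 * M) := mul_le_mul hAT hBle hB0 (le_trans hA0 hAT)
  _ < T * 4 := by
      apply mul_lt_mul_of_pos_left _ hT0
      linarith
  _ = 4 * T := by ring
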